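/- The scalar prefactor γ(Δt, ξ) = (1 − i Δt (ū·ξ))/(1 + Δt² ρ̄ λ |ξ|²) in the amplification matrix satisfies |γ(Δt,ξ)| ≤ 1 whenever (ū·ξ)² ≤ ρ̄ λ |ξ|² · (2 + Δt² ρ̄ λ |ξ|²); in particular, if |ū|² ≤ 2 ρ̄ λ then |γ(Δt,ξ)| ≤ 1 for all Δt ≥ 0 and ξ ∈ ℝ². -/

import Mathlib

open Complex

/-- The scalar prefactor γ(Δt, ξ) of the amplification matrix. -/
noncomputable def gammaFac (ρb lam : ℝ) (ub : Fin 2 → ℝ) (dt : ℝ) (ξ : Fin 2 → ℝ) : ℂ :=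
  ((1 : ℂ) - I * dt * (ub 0 * ξ 0 + ub 1 * ξ 1)) /
    (1 + dt^2 * ρb * lam * ((ξ 0)^2 + (ξ 1)^2))

lemma gamma_key (s D : ℝ) (hD : 1 ≤ D) (h : 1 + s^2 ≤ D^2) :
    ‖(1 - I * s) / (D : ℂ)‖ ≤ 1 := by
  have hD0 : (0:ℝ) < D := lt_of_lt_of_le one_pos hD
  rw [norm_div, Complex.norm_real, Real.norm_of_nonneg hD0.le, div_le_one hD0]
  have habs : ‖1 - I * s‖ ^ 2 = 1 + s ^ 2 := by
    rw [Complex.sq_norm, Complex.normSq_apply]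
    simp [Complex.sub_re, Complex.sub_im]
    ring
  nlinarith [norm_nonneg (1 - I * (s:ℂ))]

lemma gamma_main (ρb lam : ℝ) (ub : Fin 2 → ℝ) (dt : ℝ) (hdt : 0 ≤ dt)
    (ξ : Fin 2 → ℝ)
    (h : (ub 0 * ξ 0 + ub 1 * ξ 1)^2
        ≤ ρb * lam * ((ξ 0)^2 + (ξ 1)^2) * (2 + dt^2 * ρb * lam * ((ξ 0)^2 + (ξ 1)^2)))
    (hpos : 0 ≤ dt^2 * ρb * lam * ((ξ 0)^2 + (ξ 1)^2)) :
    ‖gammaFac ρb lam ub dt ξ‖ ≤ 1 := by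
  set s : ℝ := ub 0 * ξ 0 + ub 1 * ξ 1 with hs
  set D : ℝ := 1 + dt^2 * ρb * lam * ((ξ 0)^2 + (ξ 1)^2) with hDdef
  have hD : 1 ≤ D := by simp [hDdef]; linarith
  have hgam : gammaFac ρb lam ub dt ξ = (1 - I * (dt * s : ℝ)) / (D : ℂ) := by
    simp only [gammaFac, hDdef, hs]
    push_cast
    ring_nf
  rw [hgam]
  apply gamma_key _ _ hD
  have : dt^2 * s^2 ≤ dt^2 * ρb * lam * ((ξ 0)^2 + (ξ 1)^2) * (2 + dt^2 * ρb * lam * ((ξ 0)^2 + (ξ 1)^2)) := by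
    nlinarith [sq_nonneg dt]
  nlinarith

/-- |γ(Δt,ξ)| ≤ 1 whenever (ū·ξ)² ≤ ρ̄ λ |ξ|² (2 + Δt² ρ̄ λ |ξ|²); in particular,
if |ū|² ≤ 2 ρ̄ λ then |γ(Δt,ξ)| ≤ 1 for all Δt ≥ 0 and ξ. -/
theorem stmt8 (ρb lam : ℝ) (hρb : 0 < ρb) (hlam : 0 < lam) (ub : Fin 2 → ℝ) :
    (∀ dt : ℝ, 0 ≤ dt → ∀ ξ : Fin 2 → ℝ,
      (ub 0 * ξ 0 + ub 1 * ξ 1)^2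
          ≤ ρb * lam * ((ξ 0)^2 + (ξ 1)^2) * (2 + dt^2 * ρb * lam * ((ξ 0)^2 + (ξ 1)^2)) →
        ‖gammaFac ρb lam ub dt ξ‖ ≤ 1) ∧
    ((ub 0)^2 + (ub 1)^2 ≤ 2 * ρb * lam →
      ∀ dt : ℝ, 0 ≤ dt → ∀ ξ : Fin 2 → ℝ, ‖gammaFac ρb lam ub dt ξ‖ ≤ 1) := by
  have hposD : ∀ dt : ℝ, ∀ ξ : Fin 2 → ℝ,
      0 ≤ dt^2 * ρb * lam * ((ξ 0)^2 + (ξ 1)^2) := by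
    intro dt ξ
    have := sq_nonneg dt
    have h1 := sq_nonneg (ξ 0)
    have h2 := sq_nonneg (ξ 1)
    positivity
  constructor
  · intro dt hdt ξ h
    exact gamma_main ρb lam ub dt hdt ξ h (hposD dt ξ)
  · intro hub dt hdt ξ
    apply gamma_main ρb lam ub dt hdt ξ _ (hposD dt ξ)
    have hCS : (ub 0 * ξ 0 + ub 1 * ξ 1)^2 ≤ ((ub 0)^2 + (ub 1)^2) * ((ξ 0)^2 + (ξ 1)^2) := by
      nlinarith [sq_nonneg (ub 0 * ξ 1 - ub 1 * ξ 0)]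
    have hx : (0:ℝ) ≤ (ξ 0)^2 + (ξ 1)^2 := by positivity
    have h1 : ((ub 0)^2 + (ub 1)^2) * ((ξ 0)^2 + (ξ 1)^2) ≤ 2 * ρb * lam * ((ξ 0)^2 + (ξ 1)^2) :=
      mul_le_mul_of_nonneg_right hub hx
    have h2 : 0 ≤ ρb * lam * ((ξ 0)^2 + (ξ 1)^2) * (dt^2 * ρb * lam * ((ξ 0)^2 + (ξ 1)^2)) :=
      mul_nonneg (mul_nonneg (mul_pos hρb hlam).le hx) (hposD dt ξ)
    nlinarith [h1, h2, hCS]
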